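/- Let E be a real normed vector space, Θ ⊆ E a nonempty closed convex set, and f₁, …, f_N : E → ℝ functions each of which is CSN with smoothness β > 0. Let θ₁, …, θ_N ∈ Θ, let ε̂ = (1/N) inf_{θ ∈ Θ} Σ_{n=1}^N f_n(θ), and let Ê ≥ ε̂. Let R > 0 and set η* = 1/(2(β + √(β² + βNÊ/(2R²)))). If Regret(f_n) ≤ R²/η* + (η*/2) Σ_{n=1}^N ‖f_n′(θ_n)‖², then Regret(f_n) ≤ 8βR² + √(8βR²NÊ). -/

import Mathlib

open Finset

/-- A differentiable function `f : E → ℝ` is CSN with smoothness `β` if it is convex,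
non-negative, and its Fréchet derivative is `β`-Lipschitz in the operator (dual) norm. -/
def IsCSN {E : Type*} [NormedAddCommGroup E] [NormedSpace ℝ E]
    (f : E → ℝ) (β : ℝ) : Prop :=
  ConvexOn ℝ Set.univ f ∧ (∀ x, 0 ≤ f x) ∧ Differentiable ℝ f ∧
    ∀ x y, ‖fderiv ℝ f x - fderiv ℝ f y‖ ≤ β * ‖x - y‖

/-- `Regret(f_n) = Σ_{n=1}^N f_n(θ_n) − inf_{θ ∈ Θ} Σ_{n=1}^N f_n(θ)`. -/
noncomputable def regret {E : Type*} (Θ : Set E) (N : ℕ)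
    (f : ℕ → E → ℝ) (θ : ℕ → E) : ℝ :=
  (∑ n ∈ Finset.Icc 1 N, f n (θ n))
    - sInf ((fun x => ∑ n ∈ Finset.Icc 1 N, f n x) '' Θ)


lemma descent {E : Type*} [NormedAddCommGroup E] [NormedSpace ℝ E]
    (f : E → ℝ) (β : ℝ) (hβ0 : 0 ≤ β)
    (hd : Differentiable ℝ f)
    (hL : ∀ x y, ‖fderiv ℝ f x - fderiv ℝ f y‖ ≤ β * ‖x - y‖)
    (x v : E) (hv : ‖v‖ ≤ 1) (t : ℝ) (ht : 0 ≤ t) :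
    f (x + t • v) ≤ f x + t * (fderiv ℝ f x v) + β / 2 * t ^ 2 := by
  set c := fderiv ℝ f x v with hc
  set φ : ℝ → ℝ := fun s => f (x + s • v) with hφdef
  have hφ : ∀ s : ℝ, HasDerivAt φ (fderiv ℝ f (x + s • v) v) s := by
    intro s
    have hline : HasDerivAt (fun s : ℝ => x + s • v) v s := by
      simpa using ((hasDerivAt_id s).smul_const v).const_add x
    exact ((hd (x + s • v)).hasFDerivAt.comp_hasDerivAt s hline)
  set ψ : ℝ → ℝ := fun s => f x + s * c + β / 2 * s ^ 2 - φ s with hψdef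
  have hψd : ∀ s : ℝ, HasDerivAt ψ (c + β * s - fderiv ℝ f (x + s • v) v) s := by
    intro s
    have h1 : HasDerivAt (fun s : ℝ => f x + s * c) c s := by
      simpa using ((hasDerivAt_id s).mul_const c).const_add (f x)
    have h2 : HasDerivAt (fun s : ℝ => β / 2 * s ^ 2) (β * s) s := by
      have := (hasDerivAt_pow 2 s).const_mul (β / 2)
      refine this.congr_deriv ?_
      norm_num
      ring
    exact (h1.add h2).sub (hφ s)
  have hmono : MonotoneOn ψ (Set.Ici (0:ℝ)) := by
    apply monotoneOn_of_deriv_nonneg (convex_Ici 0)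
    · exact fun s _ => (hψd s).differentiableAt.continuousAt.continuousWithinAt
    · exact fun s _ => ((hψd s).differentiableAt).differentiableWithinAt
    · intro s hs
      rw [(hψd s).deriv]
      have hs0 : 0 ≤ s := le_of_lt (by simpa using hs)
      have hb : fderiv ℝ f (x + s • v) v - c ≤ β * s := by
        have h1 : fderiv ℝ f (x + s • v) v - c
            = (fderiv ℝ f (x + s • v) - fderiv ℝ f x) v := by
          simp [hc]
        have h2 : ‖(fderiv ℝ f (x + s • v) - fderiv ℝ f x) v‖
            ≤ ‖fderiv ℝ f (x + s • v) - fderiv ℝ f x‖ * ‖v‖ :=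
          ContinuousLinearMap.le_opNorm _ _
        have h3 : ‖fderiv ℝ f (x + s • v) - fderiv ℝ f x‖ ≤ β * (s * ‖v‖) := by
          have := hL (x + s • v) x
          simpa [norm_smul, abs_of_nonneg hs0, mul_comm] using this
        calc fderiv ℝ f (x + s • v) v - c ≤ ‖(fderiv ℝ f (x + s • v) - fderiv ℝ f x) v‖ := by
              rw [h1]; exact le_abs_self _
          _ ≤ β * s := by
              have h4 := mul_le_mul_of_nonneg_right h3 (norm_nonneg v)
              have h5 : ‖v‖ * ‖v‖ ≤ 1 :=
                mul_le_one₀ hv (norm_nonneg v) hv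
              have h6 : β * s * (‖v‖ * ‖v‖) ≤ β * s * 1 :=
                mul_le_mul_of_nonneg_left h5 (mul_nonneg hβ0 hs0)
              nlinarith [h2, h4, h6]
      linarith
  have h0 : ψ 0 ≤ ψ t := hmono (by simp) (by simpa using ht) ht
  have hψ0 : ψ 0 = 0 := by simp [hψdef, hφdef]
  have : 0 ≤ f x + t * c + β / 2 * t ^ 2 - φ t := by rw [← hψ0]; exact h0
  simpa [hφdef] using this

lemma selfbound {E : Type*} [NormedAddCommGroup E] [NormedSpace ℝ E]
    (f : E → ℝ) (β : ℝ) (hβ : 0 < β)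
    (hnn : ∀ x, 0 ≤ f x)
    (hd : Differentiable ℝ f)
    (hL : ∀ x y, ‖fderiv ℝ f x - fderiv ℝ f y‖ ≤ β * ‖x - y‖)
    (x : E) : ‖fderiv ℝ f x‖ ^ 2 ≤ 2 * β * f x := by
  set g := fderiv ℝ f x with hg
  have key : ‖g‖ ≤ Real.sqrt (2 * β * f x) := by
    by_contra h
    push_neg at h
    obtain ⟨v, hv1, hv2⟩ := g.exists_lt_apply_of_lt_opNorm h
    set c := ‖g v‖ with hcdef
    have hc0 : 0 ≤ c := norm_nonneg _
    set w : E := if 0 ≤ g v then -v else v with hw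
    have hgw : g w = -c := by
      rcases le_or_gt 0 (g v) with h' | h'
      · simp [hw, h', hcdef, Real.norm_eq_abs, abs_of_nonneg h']
      · simp [hw, not_le.2 h', hcdef, Real.norm_eq_abs, abs_of_neg h']
    have hw1 : ‖w‖ ≤ 1 := by
      have hwe : ‖w‖ = ‖v‖ := by
        rcases le_or_gt 0 (g v) with h' | h' <;> simp [hw, h', not_le.2]
      rw [hwe]; exact le_of_lt hv1
    have hdes := descent f β hβ.le hd hL x w hw1 (c / β) (div_nonneg hc0 hβ.le)
    have hnn' := hnn (x + (c / β) • w)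
    rw [← hg, hgw] at hdes
    have hineq : c ^ 2 ≤ 2 * β * f x := by
      have hβ' : β ≠ 0 := ne_of_gt hβ
      have h := le_trans hnn' hdes
      have heq : f x + c / β * -c + β / 2 * (c / β) ^ 2 = f x - c ^ 2 / (2 * β) := by
        field_simp
        ring
      rw [heq] at h
      have h3 : c ^ 2 / (2 * β) ≤ f x := by linarith
      have h4 := (div_le_iff₀ (by positivity : (0:ℝ) < 2 * β)).mp h3
      linarith
    have h2 : 0 ≤ 2 * β * f x := mul_nonneg (by linarith) (hnn x)
    have : c ≤ Real.sqrt (2 * β * f x) := by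
      nlinarith [Real.sq_sqrt h2, Real.sqrt_nonneg (2 * β * f x)]
    linarith [hv2]
  have h2 : 0 ≤ 2 * β * f x := mul_nonneg (by linarith) (hnn x)
  calc ‖g‖ ^ 2 ≤ Real.sqrt (2 * β * f x) ^ 2 := by
        apply pow_le_pow_left₀ (norm_nonneg _) key
    _ = 2 * β * f x := Real.sq_sqrt h2

set_option maxHeartbeats 1600000 in
/-- Lemma B.1 -/
theorem bias_dependent_regret
    {E : Type*} [NormedAddCommGroup E] [NormedSpace ℝ E]
    (Θ : Set E) (hne : Θ.Nonempty) (hcl : IsClosed Θ) (hcv : Convex ℝ Θ)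
    (N : ℕ) (hN : 1 ≤ N)
    (f : ℕ → E → ℝ) (β : ℝ) (hβ : 0 < β)
    (hCSN : ∀ n ∈ Finset.Icc 1 N, IsCSN (f n) β)
    (θ : ℕ → E) (hθ : ∀ n ∈ Finset.Icc 1 N, θ n ∈ Θ)
    (εhat Ehat R ηstar : ℝ)
    (hεhat : εhat = (1 / (N : ℝ)) * sInf ((fun x => ∑ n ∈ Finset.Icc 1 N, f n x) '' Θ))
    (hEhat : εhat ≤ Ehat)
    (hR : 0 < R)
    (hη : ηstar = 1 / (2 * (β + Real.sqrt (β ^ 2 + β * N * Ehat / (2 * R ^ 2)))))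
    (hreg : regret Θ N f θ ≤ R ^ 2 / ηstar
        + (ηstar / 2) * ∑ n ∈ Finset.Icc 1 N, ‖fderiv ℝ (f n) (θ n)‖ ^ 2) :
    regret Θ N f θ ≤ 8 * β * R ^ 2 + Real.sqrt (8 * β * R ^ 2 * N * Ehat) := by
  set S := sInf ((fun x => ∑ n ∈ Finset.Icc 1 N, f n x) '' Θ) with hS
  have hNpos : (0:ℝ) < N := by exact_mod_cast Nat.lt_of_lt_of_le Nat.zero_lt_one hN
  have hS0 : 0 ≤ S := by
    apply le_csInf (hne.image _)
    rintro b ⟨x, -, rfl⟩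
    exact Finset.sum_nonneg fun n hn => (hCSN n hn).2.1 x
  have hε0 : 0 ≤ εhat := by
    rw [hεhat]
    exact mul_nonneg (by positivity) hS0
  have hE0 : 0 ≤ Ehat := le_trans hε0 hEhat
  have hSle : S ≤ N * Ehat := by
    have h : εhat * N = S := by
      rw [hεhat]; field_simp
    nlinarith [hEhat, hNpos]
  set Reg := regret Θ N f θ with hReg
  have hsumθ : ∑ n ∈ Finset.Icc 1 N, f n (θ n) = Reg + S := by
    simp only [hReg, regret, ← hS]; ring
  have hsum : ∑ n ∈ Finset.Icc 1 N, ‖fderiv ℝ (f n) (θ n)‖ ^ 2 ≤ 2 * β * (Reg + S) := by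
    rw [← hsumθ, Finset.mul_sum]
    apply Finset.sum_le_sum
    intro n hn
    obtain ⟨hconv, hnn, hd, hL⟩ := hCSN n hn
    exact selfbound (f n) β hβ hnn hd hL (θ n)
  set X := β * N * Ehat / (2 * R ^ 2) with hX
  have hX0 : 0 ≤ X := by positivity
  set s := Real.sqrt (β ^ 2 + X) with hs
  have hargnn : (0:ℝ) ≤ β ^ 2 + X := by positivity
  have hs2 : s ^ 2 = β ^ 2 + X := Real.sq_sqrt hargnn
  have hsnn : 0 ≤ s := Real.sqrt_nonneg _
  have hsge : β ≤ s := by nlinarith [hs2, hsnn]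
  have hspos : 0 < s := lt_of_lt_of_le hβ hsge
  have hηpos : 0 < ηstar := by rw [hη]; positivity
  have hηval : ηstar * (2 * (β + s)) = 1 := by
    rw [hη]; field_simp
  have h1 : Reg ≤ R ^ 2 / ηstar + ηstar * β * (Reg + S) := by
    have h2 := mul_le_mul_of_nonneg_left hsum (le_of_lt (half_pos hηpos))
    linarith [hreg, h2]
  have hRη : R ^ 2 / ηstar = 2 * R ^ 2 * (β + s) := by
    rw [hη]
    have hne2 : (2 * (β + s)) ≠ 0 := by positivity
    field_simp
  have hbNE : β * (N * Ehat) = 2 * R ^ 2 * (s ^ 2 - β ^ 2) := by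
    have hR2 : (2 * R ^ 2) ≠ 0 := by positivity
    have : X * (2 * R ^ 2) = β * N * Ehat := by
      rw [hX]; field_simp
    nlinarith [hs2]
  have hηS : ηstar * β * (N * Ehat) = R ^ 2 * (s - β) := by
    linear_combination ηstar * hbNE + R ^ 2 * (s - β) * hηval
  have hmid : ηstar * β * S ≤ ηstar * β * (N * Ehat) :=
    mul_le_mul_of_nonneg_left hSle (by positivity)
  have hkey : Reg * (1 - ηstar * β) ≤ R ^ 2 * (β + 3 * s) := by
    rw [hRη] at h1
    linarith [h1, hmid, hηS]
  have hηβ : ηstar * β ≤ 1 / 4 := by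
    have h4 : 4 * β ≤ 2 * (β + s) := by linarith
    have h5 := mul_le_mul_of_nonneg_left h4 hηpos.le
    linarith [hηval, h5]
  have hsqrtnn : 0 ≤ Real.sqrt (8 * β * R ^ 2 * N * Ehat) := Real.sqrt_nonneg _
  rcases le_or_gt Reg 0 with hR0 | hR0
  · have : 0 ≤ 8 * β * R ^ 2 := by positivity
    linarith
  · have hs_le : s ≤ β + Real.sqrt X := by
      nlinarith [Real.sq_sqrt hX0, Real.sqrt_nonneg X, hs2, hsnn]
    have hsqeq : (4 * R ^ 2) * Real.sqrt X = Real.sqrt (8 * β * R ^ 2 * N * Ehat) := by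
      have harg : 8 * β * R ^ 2 * N * Ehat = (4 * R ^ 2) ^ 2 * X := by
        rw [hX]; field_simp; ring
      rw [harg, Real.sqrt_mul (by positivity), Real.sqrt_sq (by positivity)]
    have hfrac : Reg ≤ (4 / 3) * (R ^ 2 * (β + 3 * s)) := by nlinarith [hkey, hηβ, hR0]
    have hfinal : (4 / 3) * (R ^ 2 * (β + 3 * s))
        ≤ 8 * β * R ^ 2 + Real.sqrt (8 * β * R ^ 2 * N * Ehat) := by
      rw [← hsqeq]
      nlinarith [hs_le, sq_nonneg R, hβ, hR]
    linarith
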